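/- arXiv:1809.02960 — 3 statements merged into one kernel-verified Lean document; each statement's English description precedes it below -/
import Mathlib

section
/- Let G be a simple connected graph on vertex set {1,…,n}. For each i ∈ {1,…,n}, the n rows of L_G(i) ∈ ℤ^{n×(n-1)} are affinely independent, so their convex hull P_{G,i} is an (n−1)-dimensional simplex in ℝ^{n-1}; moreover, for any i ≠ j there exists U ∈ GL_{n-1}(ℤ) such that L_G(j) = L_G(i)·U, so P_{G,i} and P_{G,j} are unimodularly equivalent. -/
open Matrix Finset

/-- The number of spanning trees of `G`: spanning subgraphs of `G` which are trees. -/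
noncomputable def spanningTreeCount {V : Type*} (G : SimpleGraph V) : ℕ :=
  Nat.card {H : SimpleGraph V // H ≤ G ∧ H.IsTree}

/-- The integer Laplacian matrix of a graph on `Fin m`. -/
noncomputable def lap {m : ℕ} (G : SimpleGraph (Fin m)) : Matrix (Fin m) (Fin m) ℤ :=
  letI : DecidableRel G.Adj := fun _ _ => Classical.dec _
  SimpleGraph.lapMatrix ℤ G

/-- The matrix `[L_G(m) | 𝟙]` : the Laplacian with its last column deleted and a column
of all ones appended. -/
noncomputable def lapAug {m : ℕ} (G : SimpleGraph (Fin m)) : Matrix (Fin m) (Fin m) ℤ :=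
  Matrix.of fun r j => if (j : ℕ) + 1 = m then 1 else lap G r j

/-- The Laplacian matrix with its `i`-th column deleted. -/
noncomputable def lapDel {k : ℕ} (G : SimpleGraph (Fin (k+1))) (i : Fin (k+1)) :
    Matrix (Fin (k+1)) (Fin k) ℤ :=
  (lap G).submatrix id i.succAbove

/-- `Λ(P)` for a simplex whose augmented vertex matrix is `M`: the fractional vectors
`λ` with `0 ≤ λᵢ < 1` such that `λ·M` has integer entries. -/
def Lambda {m : ℕ} (M : Matrix (Fin m) (Fin m) ℤ) : Set (Fin m → ℚ) :=
  {lam | (∀ i, 0 ≤ lam i ∧ lam i < 1) ∧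
    ∀ j, ∃ z : ℤ, (Matrix.vecMul lam (M.map (fun a : ℤ => (a : ℚ)))) j = (z : ℚ)}

/-- The Laplacian simplex `P_G ⊆ ℝ^{m-1}` : the convex hull of the rows of the Laplacian
matrix with its last column deleted. -/
noncomputable def PG {m : ℕ} (G : SimpleGraph (Fin m)) : Set (Fin (m-1) → ℝ) :=
  convexHull ℝ (Set.range fun r : Fin m => fun j : Fin (m-1) =>
    (lap G r ⟨(j : ℕ), by have := j.isLt; omega⟩ : ℝ))

/-- A polytope `P` (with `0` in its interior) is reflexive if its dual
`{x | x·y ≤ 1 ∀ y ∈ P}` is a lattice polytope, i.e. the convex hull of finitely many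
integer points. -/
def IsReflexive {d : ℕ} (P : Set (Fin d → ℝ)) : Prop :=
  (0 : Fin d → ℝ) ∈ interior P ∧
  ∃ S : Finset (Fin d → ℝ), (∀ v ∈ S, ∀ i, ∃ z : ℤ, v i = (z : ℝ)) ∧
    {x : Fin d → ℝ | ∀ y ∈ P, ∑ i, x i * y i ≤ 1} = convexHull ℝ (S : Set (Fin d → ℝ))

/-- The linear code over `ℤ/m` associated to a (reflexive) Laplacian simplex:
`C(P_G) = { x mod m : x/m ∈ Λ(P_G) }`. -/
def code {m : ℕ} (G : SimpleGraph (Fin m)) : Set (Fin m → ZMod m) :=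
  {c | ∃ x : Fin m → ℤ, (∀ i, (x i : ZMod m) = c i) ∧
    (fun i => (x i : ℚ) / (m : ℚ)) ∈ Lambda (lapAug G)}

/-- The change-of-basis matrix between the Laplacian with column `i` deleted and
the Laplacian with column `j` deleted. -/
def Umat {n : ℕ} (i j : Fin (n+1)) : Matrix (Fin n) (Fin n) ℤ :=
  Matrix.of fun a b =>
    if j.succAbove b = i then -1 else if i.succAbove a = j.succAbove b then 1 else 0

lemma umat_mul {n : ℕ} (i j : Fin (n+1)) (hij : i ≠ j) : Umat i j * Umat j i = 1 := by
  ext a a'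
  rw [Matrix.mul_apply, Matrix.one_apply]
  rcases eq_or_ne (i.succAbove a') j with h | h
  · -- second column of the product matrix is constant -1
    have hcalc : ∀ b : Fin n, Umat i j a b * Umat j i b a'
        = (if j.succAbove b = i then (-1:ℤ)
            else if i.succAbove a = j.succAbove b then 1 else 0) * (-1) := by
      intro b
      simp only [Umat, Matrix.of_apply, if_pos h]
    rw [Finset.sum_congr rfl fun b _ => hcalc b, ← Finset.sum_mul]
    have hf : ∀ c : Fin (n+1),
        (if c = i then (-1 : ℤ) else if i.succAbove a = c then 1 else 0)
        = (if c = i then -1 else 0) + (if c = i.succAbove a then 1 else 0) := by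
      intro c
      by_cases hc : c = i
      · have h2 : c ≠ i.succAbove a := by
          rw [hc]; exact fun hh => Fin.succAbove_ne i a hh.symm
        rw [if_pos hc, if_pos hc, if_neg h2]; ring
      · rw [if_neg hc, if_neg hc, zero_add]
        by_cases h3 : c = i.succAbove a
        · rw [if_pos h3, if_pos h3.symm]
        · rw [if_neg h3, if_neg fun hh => h3 hh.symm]
    have hfull : ∑ c : Fin (n+1),
        (if c = i then (-1 : ℤ) else if i.succAbove a = c then 1 else 0) = 0 := by
      simp only [hf, Finset.sum_add_distrib, Finset.sum_ite_eq', Finset.mem_univ, if_true]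
      ring
    rw [Fin.sum_univ_succAbove (fun c =>
      if c = i then (-1 : ℤ) else if i.succAbove a = c then 1 else 0) j] at hfull
    simp only [if_neg (Ne.symm hij)] at hfull
    have hiff : (i.succAbove a = j) ↔ (a = a') := by
      rw [← h]
      exact ⟨fun hh => Fin.succAbove_right_injective hh, fun hh => by rw [hh]⟩
    by_cases hne : a = a'
    · rw [if_pos (hiff.2 hne)] at hfull
      rw [if_pos hne]
      linarith
    · rw [if_neg fun hh => hne (hiff.1 hh)] at hfull
      rw [if_neg hne]
      linarith
  · obtain ⟨b0, hb0⟩ := Fin.exists_succAbove_eq h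
    have hb0i : j.succAbove b0 ≠ i := by rw [hb0]; exact Fin.succAbove_ne i a'
    rw [Finset.sum_eq_single b0]
    · simp only [Umat, Matrix.of_apply]
      rw [if_neg h, if_pos hb0, mul_one, if_neg hb0i, hb0]
      by_cases hne : a = a'
      · simp [hne]
      · rw [if_neg fun hh => hne (Fin.succAbove_right_injective hh), if_neg hne]
    · intro b _ hb
      have hne : j.succAbove b ≠ i.succAbove a' := by
        rw [← hb0]; exact fun hh => hb (Fin.succAbove_right_injective hh)
      simp only [Umat, Matrix.of_apply, if_neg h, if_neg hne, mul_zero]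
    · intro hb; exact absurd (Finset.mem_univ b0) hb

/-- The rows of `L_G(i)` are affinely independent (so their convex hull
is an `n`-dimensional simplex in `ℝ^n` for a graph on `n+1` vertices), and for `i ≠ j`
there is `U ∈ GL_n(ℤ)` with `L_G(j) = L_G(i)·U`, so the simplices `P_{G,i}` and `P_{G,j}`
are unimodularly equivalent. -/
theorem lapDel_affineIndependent_and_unimodular {n : ℕ}
    (G : SimpleGraph (Fin (n+1))) (hG : G.Connected) :
    (∀ i : Fin (n+1),
      AffineIndependent ℝ
        (fun r : Fin (n+1) => fun j : Fin n => ((lapDel G i) r j : ℝ))) ∧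
    (∀ i j : Fin (n+1), i ≠ j →
      ∃ U : Matrix (Fin n) (Fin n) ℤ, IsUnit U.det ∧ lapDel G j = lapDel G i * U) := by
  classical
  letI : DecidableRel G.Adj := fun _ _ => Classical.dec _
  have hcast : ∀ a b, (G.lapMatrix ℝ) a b = ((lap G a b : ℤ) : ℝ) := by
    intro a b
    simp [lap, SimpleGraph.lapMatrix, SimpleGraph.degMatrix, SimpleGraph.adjMatrix,
      Matrix.diagonal, Matrix.sub_apply, Matrix.of_apply]
  have hrow : ∀ r : Fin (n+1), ∑ c, lap G r c = 0 := by
    intro r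
    have h := congrFun (G.lapMatrix_mulVec_const_eq_zero (R := ℤ)) r
    simpa [Matrix.mulVec, dotProduct, lap] using h
  have hsymm : ∀ a b, lap G a b = lap G b a := by
    intro a b
    exact (G.isSymm_lapMatrix (R := ℤ)).apply b a
  constructor
  · -- affine independence
    intro i
    rw [affineIndependent_iff]
    intro s w hw0 hws
    set W : Fin (n+1) → ℝ := fun r => if r ∈ s then w r else 0 with hW
    have hW0 : ∑ r, W r = 0 := by
      rw [← Finset.sum_subset s.subset_univ (fun x _ hx => by simp [hW, hx])]
      simpa [hW] using hw0
    have hWs : ∀ j : Fin n, ∑ r, W r * ((lap G r (i.succAbove j) : ℤ) : ℝ) = 0 := by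
      intro j
      have h := congrFun hws j
      simp only [Finset.sum_apply, Pi.smul_apply, smul_eq_mul, Pi.zero_apply] at h
      calc ∑ r, W r * ((lap G r (i.succAbove j) : ℤ) : ℝ)
          = ∑ r ∈ s, W r * ((lap G r (i.succAbove j) : ℤ) : ℝ) :=
            (Finset.sum_subset s.subset_univ (fun x _ hx => by simp [hW, hx])).symm
        _ = ∑ r ∈ s, w r * ((lapDel G i r j : ℤ) : ℝ) := by
            refine Finset.sum_congr rfl fun r hr => ?_
            simp [hW, hr, lapDel]
        _ = 0 := h
    have hWall : ∀ c : Fin (n+1), ∑ r, W r * ((lap G r c : ℤ) : ℝ) = 0 := by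
      intro c
      rcases eq_or_ne c i with rfl | hc
      · have key : ∀ r : Fin (n+1),
            ((lap G r c : ℤ) : ℝ) = -∑ j : Fin n, ((lap G r (c.succAbove j) : ℤ) : ℝ) := by
          intro r
          have h1 : lap G r c + ∑ j : Fin n, lap G r (c.succAbove j) = 0 := by
            rw [← Fin.sum_univ_succAbove (fun x => lap G r x) c]; exact hrow r
          have h2 : lap G r c = -∑ j : Fin n, lap G r (c.succAbove j) := by linarith
          rw [h2]; push_cast; ring
        calc ∑ r, W r * ((lap G r c : ℤ) : ℝ)
            = ∑ r, ∑ j : Fin n, -(W r * ((lap G r (c.succAbove j) : ℤ) : ℝ)) := by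
              refine Finset.sum_congr rfl fun r _ => ?_
              rw [key r, mul_neg, Finset.mul_sum]
              rw [← Finset.sum_neg_distrib]
          _ = ∑ j : Fin n, ∑ r, -(W r * ((lap G r (c.succAbove j) : ℤ) : ℝ)) :=
              Finset.sum_comm
          _ = 0 := by simp [Finset.sum_neg_distrib, hWs]
      · obtain ⟨j, hj⟩ := Fin.exists_succAbove_eq hc
        rw [← hj]; exact hWs j
    have hker : Matrix.toLin' (G.lapMatrix ℝ) W = 0 := by
      rw [Matrix.toLin'_apply]
      funext r
      calc (G.lapMatrix ℝ *ᵥ W) r = ∑ c, ((lap G r c : ℤ) : ℝ) * W c := by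
            simp [Matrix.mulVec, dotProduct, hcast]
        _ = ∑ c, W c * ((lap G c r : ℤ) : ℝ) := by
            refine Finset.sum_congr rfl fun c _ => ?_
            rw [hsymm r c]; ring
        _ = 0 := hWall r
    have hconst := (G.lapMatrix_mulVec_eq_zero_iff_forall_reachable (x := W)).1
      (by rwa [Matrix.toLin'_apply] at hker)
    intro e he
    have hWe : ∀ r, W r = W e := fun r => hconst r e (hG.preconnected r e)
    have hcard : (0:ℝ) = ((n:ℝ)+1) * W e := by
      calc (0:ℝ) = ∑ r, W r := hW0.symm
        _ = ∑ _r : Fin (n+1), W e := Finset.sum_congr rfl fun r _ => hWe r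
        _ = ((n:ℝ)+1) * W e := by
            rw [Finset.sum_const, Finset.card_univ, Fintype.card_fin, nsmul_eq_mul]
            push_cast; ring
    have hWe0 : W e = 0 := by
      rcases mul_eq_zero.mp hcard.symm with h | h
      · exfalso; have hn : (0:ℝ) < (n:ℝ)+1 := by positivity
        linarith
      · exact h
    simpa [hW, he] using hWe0
  · -- unimodular equivalence
    intro i j hij
    refine ⟨Umat i j, Matrix.isUnit_det_of_right_inverse (umat_mul i j hij), ?_⟩
    ext r b
    rw [Matrix.mul_apply]
    symm
    rcases eq_or_ne (j.succAbove b) i with h | h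
    · have hs : lap G r i + ∑ a : Fin n, lap G r (i.succAbove a) = 0 := by
        rw [← Fin.sum_univ_succAbove (fun x => lap G r x) i]; exact hrow r
      calc ∑ a : Fin n, lapDel G i r a * Umat i j a b
          = ∑ a : Fin n, lap G r (i.succAbove a) * (-1) := by
            refine Finset.sum_congr rfl fun a _ => ?_
            simp [lapDel, Umat, h]
        _ = lapDel G j r b := by
            rw [← Finset.sum_mul]
            simp only [lapDel, Matrix.submatrix_apply, id, h]
            linarith
    · obtain ⟨a0, ha0⟩ := Fin.exists_succAbove_eq h
      rw [Finset.sum_eq_single a0]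
      · simp [lapDel, Umat, ha0, h]
      · intro a _ ha
        have h1 : i.succAbove a ≠ j.succAbove b := by
          rw [← ha0]; exact fun hh => ha (Fin.succAbove_right_injective hh)
        simp [Umat, h, h1]
      · intro hb'; exact absurd (Finset.mem_univ a0) hb'
end

section
/- Let G be a simple connected graph on vertex set {1,…,n} such that the Laplacian simplex P_G is reflexive. Then Λ(P_G) = { x/n : x ∈ ℤ^n, 0 ≤ x_i < n for all i, and x·[L_G(n)|𝟙] ≡ 0 (mod n) }. -/
open Matrix Finset

lemma lap_map_real {m : ℕ} (G : SimpleGraph (Fin m)) :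
    (lap G).map (fun a : ℤ => (a : ℝ)) =
      (letI : DecidableRel G.Adj := fun _ _ => Classical.dec _; G.lapMatrix ℝ) := by
  letI : DecidableRel G.Adj := fun _ _ => Classical.dec _
  ext i j
  simp [lap, SimpleGraph.lapMatrix, SimpleGraph.degMatrix, Matrix.diagonal,
    SimpleGraph.adjMatrix]

lemma lap_symm {m : ℕ} (G : SimpleGraph (Fin m)) (i j : Fin m) : lap G i j = lap G j i := by
  letI : DecidableRel G.Adj := fun _ _ => Classical.dec _
  exact ((SimpleGraph.isSymm_lapMatrix (R := ℤ) G).apply j i)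

lemma lap_rowsum {m : ℕ} (G : SimpleGraph (Fin m)) (i : Fin m) : ∑ j, lap G i j = 0 := by
  letI : DecidableRel G.Adj := fun _ _ => Classical.dec _
  have h := congrFun (SimpleGraph.lapMatrix_mulVec_const_eq_zero (R := ℤ) G) i
  simpa [Matrix.mulVec, dotProduct, lap] using h

lemma lap_colsum {m : ℕ} (G : SimpleGraph (Fin m)) (j : Fin m) : ∑ i, lap G i j = 0 := by
  simp_rw [fun i => lap_symm G i j]
  exact lap_rowsum G j


lemma exists_dual {n : ℕ} (G : SimpleGraph (Fin (n+1))) (hG : G.Connected)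
    (href : IsReflexive (PG G)) (i₀ : Fin (n+1)) :
    ∃ a : Fin n → ℤ, ∀ i, i ≠ i₀ → ∑ j : Fin n, lap G i (Fin.castSucc j) * a j = 1 := by
  letI : DecidableRel G.Adj := fun _ _ => Classical.dec _
  have hSex : ∃ S : Finset (Fin n → ℝ), (∀ v ∈ S, ∀ i : Fin n, ∃ z : ℤ, v i = (z : ℝ)) ∧
      {x : Fin n → ℝ | ∀ y ∈ PG G, ∑ i, x i * y i ≤ 1}
        = convexHull ℝ (S : Set (Fin n → ℝ)) := by
    obtain ⟨-, S₀, h1, h2⟩ := href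
    exact ⟨S₀, h1, h2⟩
  obtain ⟨S, hSint, hSdual⟩ := hSex
  set vtx : Fin (n+1) → Fin n → ℝ := fun r j => ((lap G r (Fin.castSucc j) : ℤ) : ℝ) with hvtx
  have hPG : PG G = convexHull ℝ (Set.range vtx) := rfl
  have hvPG : ∀ r, vtx r ∈ PG G := by
    intro r; rw [hPG]; exact subset_convexHull ℝ _ ⟨r, rfl⟩
  have hcolR : ∀ j : Fin n, ∑ i, vtx i j = 0 := by
    intro j
    have := lap_colsum G (Fin.castSucc j)
    have : ((∑ i, lap G i (Fin.castSucc j) : ℤ) : ℝ) = 0 := by rw [this]; norm_num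
    simpa [hvtx] using this
  -- the matrix of rows ≠ i₀
  set B : Matrix (Fin n) (Fin n) ℝ := Matrix.of (fun i' j => vtx (i₀.succAbove i') j) with hB
  have hinj : Function.Injective B.vecMul := by
    rw [Matrix.vecMul_injective_iff, Fintype.linearIndependent_iff]
    intro c hc
    set d : Fin (n+1) → ℝ := i₀.insertNth 0 c with hd
    have h0 : d i₀ = 0 := by rw [hd]; exact Fin.insertNth_apply_same (α := fun _ => ℝ) i₀ 0 c
    have h1 : ∀ i', d (i₀.succAbove i') = c i' := by
      intro i'; rw [hd]; exact Fin.insertNth_apply_succAbove (α := fun _ => ℝ) i₀ 0 c i'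
    have hdcol : ∀ j : Fin n, ∑ i, d i * vtx i j = 0 := by
      intro j
      rw [Fin.sum_univ_succAbove (fun i => d i * vtx i j) i₀]
      rw [h0]
      have := congrFun hc j
      simp only [Finset.sum_apply, Pi.smul_apply, smul_eq_mul, Pi.zero_apply] at this
      simpa [h1, hB] using this
    have hdlap : ∀ jj : Fin (n+1), ∑ i, d i * ((lap G i jj : ℤ) : ℝ) = 0 := by
      intro jj
      induction jj using Fin.lastCases with
      | cast j => exact hdcol j
      | last =>
        have h1 : ∑ jj : Fin (n+1), ∑ i, d i * ((lap G i jj : ℤ) : ℝ) = 0 := by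
          rw [Finset.sum_comm]
          refine Finset.sum_eq_zero fun i _ => ?_
          rw [← Finset.mul_sum]
          have : ∑ jj, ((lap G i jj : ℤ) : ℝ) = 0 := by
            rw [← Int.cast_sum, lap_rowsum G i]; norm_num
          rw [this, mul_zero]
        rw [Fin.sum_univ_castSucc] at h1
        have h2 : ∑ j : Fin n, ∑ i, d i * ((lap G i (Fin.castSucc j) : ℤ) : ℝ) = 0 :=
          Finset.sum_eq_zero fun j _ => hdcol j
        rw [h2, zero_add] at h1
        exact h1
    have hmv : G.lapMatrix ℝ *ᵥ d = 0 := by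
      funext i
      have := hdlap i
      simp only [Matrix.mulVec, dotProduct]
      rw [show (0 : Fin (n+1) → ℝ) i = 0 from rfl]
      have hmap := congrFun (congrFun (lap_map_real G) i)
      calc ∑ j, G.lapMatrix ℝ i j * d j
          = ∑ j, d j * ((lap G i j : ℤ) : ℝ) := by
            refine Finset.sum_congr rfl fun j _ => ?_
            rw [← hmap j]; simp [Matrix.map, mul_comm]
        _ = ∑ j, d j * ((lap G j i : ℤ) : ℝ) := by
            refine Finset.sum_congr rfl fun j _ => ?_
            rw [lap_symm]
        _ = 0 := hdlap i
    have hker : ∀ i j, G.Reachable i j → d i = d j := by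
      rw [← SimpleGraph.lapMatrix_mulVec_eq_zero_iff_forall_reachable]
      exact hmv
    have hdz : ∀ i, d i = 0 := by
      intro i
      have := hker i i₀ (hG.preconnected i i₀)
      rw [this, h0]
    intro i'
    rw [← h1 i', hdz]
  have hunit : IsUnit B := Matrix.vecMul_injective_iff_isUnit.mp hinj
  obtain ⟨aR, haR⟩ := Matrix.mulVec_surjective_iff_isUnit.mpr hunit 1
  have haR' : ∀ i', ∑ j, vtx (i₀.succAbove i') j * aR j = 1 := by
    intro i'
    have := congrFun haR i'
    simpa [Matrix.mulVec, dotProduct, hB] using this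
  have hi0R : ∑ j, vtx i₀ j * aR j = -(n : ℝ) := by
    have hsum : ∑ r, ∑ j, vtx r j * aR j = 0 := by
      rw [Finset.sum_comm]
      refine Finset.sum_eq_zero fun j _ => ?_
      rw [← Finset.sum_mul, hcolR j, zero_mul]
    rw [Fin.sum_univ_succAbove (fun r => ∑ j, vtx r j * aR j) i₀] at hsum
    have : ∑ i' : Fin n, ∑ j, vtx (i₀.succAbove i') j * aR j = n := by
      rw [Finset.sum_congr rfl fun i' _ => haR' i']
      simp
    rw [this] at hsum
    linarith
  -- aR is in the dual polytope
  have hmem : aR ∈ {x : Fin n → ℝ | ∀ y ∈ PG G, ∑ i, x i * y i ≤ 1} := by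
    intro y hy
    rw [hPG] at hy
    have hcvx : Convex ℝ {y : Fin n → ℝ | ∑ i, aR i * y i ≤ 1} := by
      refine convex_halfSpace_le ?_ 1
      constructor
      · intro y z; simp [mul_add, Finset.sum_add_distrib]
      · intro c y; simp [Finset.mul_sum]; refine Finset.sum_congr rfl fun i _ => ?_; ring
    refine convexHull_min ?_ hcvx hy
    rintro _ ⟨r, rfl⟩
    show ∑ i, aR i * vtx r i ≤ 1
    rcases eq_or_ne r i₀ with h | h
    · have : ∑ i, aR i * vtx r i = -(n:ℝ) := by
        rw [h, ← hi0R]; exact Finset.sum_congr rfl fun i _ => mul_comm _ _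
      rw [this]
      have : (0:ℝ) ≤ n := Nat.cast_nonneg n
      linarith
    · obtain ⟨i', rfl⟩ := Fin.exists_succAbove_eq h
      have : ∑ i, aR i * vtx (i₀.succAbove i') i = 1 := by
        rw [← haR' i']; exact Finset.sum_congr rfl fun i _ => mul_comm _ _
      rw [this]
  have hSex : ∃ S : Finset (Fin n → ℝ), (∀ v ∈ S, ∀ i : Fin n, ∃ z : ℤ, v i = (z : ℝ)) ∧
      {x : Fin n → ℝ | ∀ y ∈ PG G, ∑ i, x i * y i ≤ 1}
        = convexHull ℝ (S : Set (Fin n → ℝ)) := by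
    obtain ⟨-, S₀, h1, h2⟩ := href
    exact ⟨S₀, h1, h2⟩
  obtain ⟨S, hSint, hSdual⟩ := hSex
  -- write aR as convex combination of lattice points of S
  rw [hSdual, Finset.mem_convexHull'] at hmem
  obtain ⟨w, hw0, hw1, hwsum⟩ := hmem
  -- S ⊆ dual polytope
  have hSle : ∀ s ∈ S, ∀ r, ∑ j, s j * vtx r j ≤ 1 := by
    intro s hs r
    have : s ∈ {x : Fin n → ℝ | ∀ y ∈ PG G, ∑ i, x i * y i ≤ 1} := by
      rw [hSdual]; exact subset_convexHull ℝ _ hs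
    exact this (vtx r) (hvPG r)
  -- the linear functional g
  set C : Fin n → ℝ := fun j => ∑ i' : Fin n, vtx (i₀.succAbove i') j with hC
  have hg : ∀ s : Fin n → ℝ, ∑ j, s j * C j = ∑ i' : Fin n, ∑ j, s j * vtx (i₀.succAbove i') j := by
    intro s
    simp_rw [hC, Finset.mul_sum]
    rw [Finset.sum_comm]
  have hgaR : ∑ j, aR j * C j = n := by
    rw [hg]
    have hone : ∀ i' : Fin n, ∑ j, aR j * vtx (i₀.succAbove i') j = 1 := by
      intro i'
      rw [← haR' i']; exact Finset.sum_congr rfl fun j _ => mul_comm _ _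
    rw [Finset.sum_congr rfl fun i' _ => hone i']
    simp
  have hgS : ∀ s ∈ S, ∑ j, s j * C j ≤ n := by
    intro s hs
    rw [hg]
    calc ∑ i' : Fin n, ∑ j, s j * vtx (i₀.succAbove i') j ≤ ∑ i' : Fin n, 1 :=
          Finset.sum_le_sum fun i' _ => hSle s hs (i₀.succAbove i')
      _ = n := by simp
  have hcomb : ∑ s ∈ S, w s * ∑ j, s j * C j = n := by
    have := congrFun hwsum
    calc ∑ s ∈ S, w s * ∑ j, s j * C j
        = ∑ s ∈ S, ∑ j, (w s * s j) * C j := by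
          refine Finset.sum_congr rfl fun s _ => ?_
          rw [Finset.mul_sum]; exact Finset.sum_congr rfl fun j _ => by ring
      _ = ∑ j, (∑ s ∈ S, w s * s j) * C j := by
          rw [Finset.sum_comm]
          refine Finset.sum_congr rfl fun j _ => by rw [Finset.sum_mul]
      _ = ∑ j, aR j * C j := by
          refine Finset.sum_congr rfl fun j _ => ?_
          congr 1
          have := congrFun hwsum j
          simpa [Finset.sum_apply] using this
      _ = n := hgaR
  have hzero : ∑ s ∈ S, w s * ((n : ℝ) - ∑ j, s j * C j) = 0 := by
    simp only [mul_sub]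
    rw [Finset.sum_sub_distrib, hcomb, ← Finset.sum_mul, hw1, one_mul, sub_self]
  have hterm : ∀ s ∈ S, w s * ((n : ℝ) - ∑ j, s j * C j) = 0 :=
    (Finset.sum_eq_zero_iff_of_nonneg fun s hs =>
      mul_nonneg (hw0 s hs) (by linarith [hgS s hs])).mp hzero
  have hex : ∃ s ∈ S, w s ≠ 0 := by
    by_contra hcon
    push_neg at hcon
    rw [Finset.sum_eq_zero hcon] at hw1
    norm_num at hw1
  obtain ⟨s, hsS, hws⟩ := hex
  have hgs : ∑ j, s j * C j = n := by
    have := hterm s hsS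
    rcases mul_eq_zero.mp this with h | h
    · exact absurd h hws
    · linarith
  -- each inner product is exactly 1
  have hinner : ∀ i' : Fin n, ∑ j, s j * vtx (i₀.succAbove i') j = 1 := by
    have hz : ∑ i' : Fin n, ((1:ℝ) - ∑ j, s j * vtx (i₀.succAbove i') j) = 0 := by
      rw [Finset.sum_sub_distrib, ← hg, hgs]
      simp
    have := (Finset.sum_eq_zero_iff_of_nonneg fun i' _ =>
      by linarith [hSle s hsS (i₀.succAbove i')]).mp hz
    intro i'
    have h := this i' (Finset.mem_univ i')
    linarith
  -- integer coordinates
  choose a ha using hSint s hsS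
  refine ⟨a, fun i hi => ?_⟩
  obtain ⟨i', rfl⟩ := Fin.exists_succAbove_eq hi
  have : ((∑ j, lap G (i₀.succAbove i') (Fin.castSucc j) * a j : ℤ) : ℝ) = ((1:ℤ):ℝ) := by
    push_cast
    rw [← hinner i']
    refine Finset.sum_congr rfl fun j _ => ?_
    rw [ha j, hvtx]
    ring
  exact Int.cast_injective this

/-- If `P_G` is reflexive (`G` a simple connected graph on `n+1`
vertices), then `Λ(P_G) = { x/(n+1) : x ∈ ℤ^{n+1}, 0 ≤ xᵢ < n+1,
x·[L_G(n+1)|𝟙] ≡ 0 (mod n+1) }`. -/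
theorem Lambda_eq_of_reflexive {n : ℕ}
    (G : SimpleGraph (Fin (n+1))) (hG : G.Connected)
    (href : IsReflexive (PG G)) :
    Lambda (lapAug G) =
      {lam : Fin (n+1) → ℚ | ∃ x : Fin (n+1) → ℤ,
        (∀ i, 0 ≤ x i ∧ x i < ((n : ℤ) + 1)) ∧
        (∀ i, lam i = (x i : ℚ) / ((n : ℚ) + 1)) ∧
        (∀ j, ((n : ℤ) + 1) ∣ Matrix.vecMul x (lapAug G) j)} := by
  have hM : ∀ (r j : Fin (n+1)),
      ((lapAug G).map (fun a : ℤ => (a : ℚ))) r j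
        = if (j : ℕ) + 1 = n + 1 then 1 else ((lap G r j : ℤ) : ℚ) := by
    intro r j
    simp only [Matrix.map_apply, lapAug, Matrix.of_apply]
    split_ifs <;> norm_num
  have hMlast : ∀ r : Fin (n+1), ((lapAug G).map (fun a : ℤ => (a : ℚ))) r (Fin.last n) = 1 := by
    intro r; rw [hM]; simp
  have hMcast : ∀ (r : Fin (n+1)) (j : Fin n),
      ((lapAug G).map (fun a : ℤ => (a : ℚ))) r (Fin.castSucc j) = ((lap G r (Fin.castSucc j) : ℤ) : ℚ) := by
    intro r j; rw [hM]
    have : ((Fin.castSucc j : Fin (n+1)) : ℕ) + 1 ≠ n + 1 := by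
      have := j.isLt; simp [Fin.coe_castSucc]; omega
    rw [if_neg this]
  have hnpos : ((n : ℚ) + 1) ≠ 0 := by positivity
  ext lam
  constructor
  · -- forward direction
    rintro ⟨hbd, hint⟩
    choose t ht using hint
    have hlast : ∑ r, lam r = (t (Fin.last n) : ℚ) := by
      have := ht (Fin.last n)
      rw [Matrix.vecMul, dotProduct] at this  -- may adjust
      rw [← this]
      exact (Finset.sum_congr rfl fun r _ => by rw [hMlast r, mul_one]).symm
    -- each coordinate times (n+1) is an integer
    have hx : ∀ i₀ : Fin (n+1), ∃ xi : ℤ, ((n : ℚ) + 1) * lam i₀ = (xi : ℚ) := by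
      intro i₀
      obtain ⟨a, ha⟩ := exists_dual G hG href i₀
      set K : Fin (n+1) → ℤ := fun r => ∑ j : Fin n, lap G r (Fin.castSucc j) * a j with hK
      have hK1 : ∀ r, r ≠ i₀ → K r = 1 := fun r hr => ha r hr
      have hKsum : ∑ r, K r = 0 := by
        rw [hK]
        rw [Finset.sum_comm]
        refine Finset.sum_eq_zero fun j _ => ?_
        rw [← Finset.sum_mul, lap_colsum G (Fin.castSucc j), zero_mul]
      have hK0 : K i₀ = -(n : ℤ) := by
        rw [Fin.sum_univ_succAbove K i₀] at hKsum
        have : ∑ i' : Fin n, K (i₀.succAbove i') = n := by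
          rw [Finset.sum_congr rfl fun i' _ => hK1 _ (Fin.succAbove_ne i₀ i')]
          simp
        rw [this] at hKsum
        omega
      set zc : Fin (n+1) → ℤ := fun c => if h : (c : ℕ) < n then a ⟨(c : ℕ), h⟩ else 0 with hzc
      have hzlast : zc (Fin.last n) = 0 := by
        rw [hzc]; simp
      have hzcast : ∀ j : Fin n, zc (Fin.castSucc j) = a j := by
        intro j; rw [hzc]
        have hlt : ((Fin.castSucc j : Fin (n+1)) : ℕ) < n := j.isLt
        simp only [dif_pos hlt]
        exact congrArg a (Fin.ext (by simp))
      have key : (∑ c, (t c : ℚ) * (zc c : ℚ)) = (∑ r, lam r) - ((n : ℚ) + 1) * lam i₀ := by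
        calc (∑ c, (t c : ℚ) * (zc c : ℚ))
            = ∑ c, (Matrix.vecMul lam ((lapAug G).map (fun a : ℤ => (a : ℚ)))) c * (zc c : ℚ) := by
              refine Finset.sum_congr rfl fun c _ => ?_
              rw [ht c]
          _ = ∑ c, ∑ r, lam r * ((lapAug G).map (fun a : ℤ => (a : ℚ))) r c * (zc c : ℚ) := by
              refine Finset.sum_congr rfl fun c _ => ?_
              rw [Matrix.vecMul, dotProduct, Finset.sum_mul]
          _ = ∑ r, lam r * (K r : ℚ) := by
              rw [Finset.sum_comm]
              refine Finset.sum_congr rfl fun r _ => ?_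
              rw [Fin.sum_univ_castSucc
                (f := fun c => lam r * ((lapAug G).map (fun a : ℤ => (a : ℚ))) r c * (zc c : ℚ))]
              rw [hzlast]
              push_cast
              rw [hK]
              push_cast
              rw [Finset.mul_sum]
              rw [Finset.sum_congr rfl fun j (_ : j ∈ Finset.univ) => ?_]
              · ring
              · rw [hMcast r j, hzcast j]
                push_cast
                ring
          _ = (∑ r, lam r) - ((n : ℚ) + 1) * lam i₀ := by
              rw [Fin.sum_univ_succAbove (fun r => lam r * (K r : ℚ)) i₀]
              rw [Fin.sum_univ_succAbove lam i₀]
              rw [hK0]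
              rw [Finset.sum_congr rfl fun i' (_ : i' ∈ Finset.univ) => ?_]
              · push_cast; ring
              · rw [hK1 _ (Fin.succAbove_ne i₀ i'), Int.cast_one, mul_one]
      refine ⟨t (Fin.last n) - ∑ c, t c * zc c, ?_⟩
      push_cast
      linarith [key, hlast]
    choose x hxeq using hx
    refine ⟨x, fun i => ?_, fun i => ?_, fun j => ?_⟩
    · constructor
      · have : (0 : ℚ) ≤ (x i : ℚ) := by
          rw [← hxeq i]
          exact mul_nonneg (by positivity) (hbd i).1
        exact_mod_cast this
      · have : (x i : ℚ) < (n : ℚ) + 1 := by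
          rw [← hxeq i]
          calc ((n : ℚ) + 1) * lam i < ((n : ℚ) + 1) * 1 := by
                have := (hbd i).2
                have hpos : (0 : ℚ) < (n : ℚ) + 1 := by positivity
                nlinarith
            _ = (n : ℚ) + 1 := mul_one _
        exact_mod_cast this
    · rw [eq_div_iff hnpos, mul_comm, hxeq i]
    · refine ⟨t j, ?_⟩
      have : ((Matrix.vecMul x (lapAug G)) j : ℚ) = (((( n : ℤ) + 1) * t j : ℤ) : ℚ) := by
        push_cast
        rw [Matrix.vecMul, dotProduct]
        push_cast
        calc ∑ r, (x r : ℚ) * ((lapAug G r j : ℤ) : ℚ)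
            = ∑ r, ((n : ℚ) + 1) * (lam r * ((lapAug G).map (fun a : ℤ => (a : ℚ))) r j) := by
              refine Finset.sum_congr rfl fun r _ => ?_
              rw [← hxeq r, Matrix.map_apply]
              ring
          _ = ((n : ℚ) + 1) * (Matrix.vecMul lam ((lapAug G).map (fun a : ℤ => (a : ℚ)))) j := by
              rw [← Finset.mul_sum, Matrix.vecMul, dotProduct]
          _ = ((n : ℚ) + 1) * (t j : ℚ) := by rw [ht j]
      exact_mod_cast this
  · -- backward direction
    rintro ⟨x, hb, hdiv, hdvd⟩
    constructor
    · intro i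
      rw [hdiv i]
      constructor
      · apply div_nonneg _ (by positivity)
        exact_mod_cast (hb i).1
      · rw [div_lt_one (by positivity)]
        exact_mod_cast (hb i).2
    · intro j
      obtain ⟨k, hk⟩ := hdvd j
      refine ⟨k, ?_⟩
      rw [Matrix.vecMul, dotProduct]
      calc ∑ r, lam r * ((lapAug G).map (fun a : ℤ => (a : ℚ))) r j
          = ∑ r, ((x r : ℚ) * ((lapAug G r j : ℤ) : ℚ)) / ((n : ℚ) + 1) := by
            refine Finset.sum_congr rfl fun r _ => ?_
            rw [hdiv r, Matrix.map_apply]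
            ring
        _ = (∑ r, (x r : ℚ) * ((lapAug G r j : ℤ) : ℚ)) / ((n : ℚ) + 1) := by
            rw [Finset.sum_div]
        _ = (((Matrix.vecMul x (lapAug G)) j : ℤ) : ℚ) / ((n : ℚ) + 1) := by
            rw [Matrix.vecMul, dotProduct]
            push_cast
            ring_nf
        _ = (k : ℚ) := by
            rw [hk]
            push_cast
            field_simp
end

section
/- For all n ≥ 3, the Laplacian simplex P_{W*(K_n)} ⊂ ℝ^{2n} is reflexive. -/
open Matrix Finset

/-- The graph `W*(K_n)` on `{1,…,2n+1}` (here `Fin (2n+1)`): the complete graph on the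
first `n` vertices, whisker edges `{i, i+n}` for `i < n`, and a star vertex `2n` joined
to every whisker vertex. -/
def wstar (n : ℕ) : SimpleGraph (Fin (2 * n + 1)) :=
  SimpleGraph.fromRel fun u v =>
    ((u : ℕ) < n ∧ (v : ℕ) < n) ∨
    ((u : ℕ) < n ∧ (v : ℕ) = (u : ℕ) + n) ∨
    (n ≤ (u : ℕ) ∧ (u : ℕ) < 2 * n ∧ (v : ℕ) = 2 * n)


namespace WK
open scoped Classical


lemma wstar_adj {n : ℕ} (u v : Fin (2*n+1)) :
    (wstar n).Adj u v ↔ (u : ℕ) ≠ (v : ℕ) ∧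
      ((((u : ℕ) < n ∧ (v : ℕ) < n) ∨
        ((u : ℕ) < n ∧ (v : ℕ) = (u : ℕ) + n) ∨
        (n ≤ (u : ℕ) ∧ (u : ℕ) < 2 * n ∧ (v : ℕ) = 2 * n)) ∨
       (((v : ℕ) < n ∧ (u : ℕ) < n) ∨
        ((v : ℕ) < n ∧ (u : ℕ) = (v : ℕ) + n) ∨
        (n ≤ (v : ℕ) ∧ (v : ℕ) < 2 * n ∧ (u : ℕ) = 2 * n))) := by
  rw [wstar, SimpleGraph.fromRel_adj, Ne, Ne, ← Fin.val_inj]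

lemma lap_apply {m : ℕ} (G : SimpleGraph (Fin m)) (j k : Fin m) :
    lap G j k = (if j = k then (G.degree j : ℤ) else 0) - (if G.Adj j k then 1 else 0) := by
  unfold lap
  simp [SimpleGraph.lapMatrix, SimpleGraph.degMatrix, Matrix.diagonal_apply,
    SimpleGraph.adjMatrix_apply]

lemma lap_dot {m : ℕ} (G : SimpleGraph (Fin m)) {R : Type*} [CommRing R]
    (j : Fin m) (x : Fin m → R) :
    ∑ k, ((lap G j k : ℤ) : R) * x k = ∑ k, if G.Adj j k then x j - x k else 0 := by
  simp_rw [lap_apply]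
  push_cast
  simp_rw [sub_mul, Finset.sum_sub_distrib, ite_mul, zero_mul, one_mul]
  rw [Fintype.sum_ite_eq j (fun k => (G.degree j : R) * x k)]
  rw [SimpleGraph.degree_eq_sum_if_adj (R := R) G j]
  push_cast
  rw [Finset.sum_mul, ← Finset.sum_sub_distrib]
  refine Finset.sum_congr rfl fun k _ => ?_
  split_ifs <;> simp

section Splits
variable {M : Type*} [AddCommMonoid M]

lemma split3 (n : ℕ) (g : Fin (2*n+1) → M) :
    ∑ k, g k = ((∑ s : Fin n, g ⟨s, by omega⟩) + ∑ s : Fin n, g ⟨n + s, by omega⟩)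
      + g ⟨2*n, by omega⟩ := by
  set g' : ℕ → M := fun k => if h : k < 2*n+1 then g ⟨k, h⟩ else 0 with hg'
  have e0 : ∑ k, g k = ∑ k ∈ Finset.range (2*n+1), g' k := by
    rw [← Fin.sum_univ_eq_sum_range]
    refine Finset.sum_congr rfl fun k _ => ?_
    show g k = (if h : (k:ℕ) < 2*n+1 then g ⟨k, h⟩ else 0)
    rw [dif_pos k.isLt]
  rw [e0, Finset.sum_range_succ]
  have e1 : g' (2*n) = g ⟨2*n, by omega⟩ := by simp [hg']
  have e2 : ∑ k ∈ Finset.range (2*n), g' k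
      = (∑ s : Fin n, g ⟨s, by omega⟩) + ∑ s : Fin n, g ⟨n + s, by omega⟩ := by
    conv_lhs => rw [show 2*n = n+n from two_mul n]
    rw [Finset.sum_range_add]
    congr 1
    · rw [← Fin.sum_univ_eq_sum_range (fun k => g' k)]
      refine Finset.sum_congr rfl fun s _ => ?_
      have hs : (s : ℕ) < 2*n+1 := by omega
      exact dif_pos hs
    · rw [← Fin.sum_univ_eq_sum_range (fun k => g' (n + k))]
      refine Finset.sum_congr rfl fun s _ => ?_
      have hs : n + (s : ℕ) < 2*n+1 := by omega
      exact dif_pos hs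
  rw [e1, e2]

lemma split2 (n : ℕ) (g : Fin (2*n+1-1) → M) :
    ∑ k, g k = (∑ s : Fin n, g ⟨s, by omega⟩) + ∑ s : Fin n, g ⟨n + s, by omega⟩ := by
  set g' : ℕ → M := fun k => if h : k < 2*n+1-1 then g ⟨k, h⟩ else 0 with hg'
  have e0 : ∑ k, g k = ∑ k ∈ Finset.range (2*n+1-1), g' k := by
    rw [← Fin.sum_univ_eq_sum_range]
    refine Finset.sum_congr rfl fun k _ => ?_
    simp [hg', k.isLt]
  rw [e0]
  conv_lhs => rw [show 2*n+1-1 = n+n from by omega]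
  rw [Finset.sum_range_add]
  congr 1
  · rw [← Fin.sum_univ_eq_sum_range (fun k => g' k)]
    refine Finset.sum_congr rfl fun s _ => ?_
    have hs : (s : ℕ) < 2*n+1-1 := by omega
    exact dif_pos hs
  · rw [← Fin.sum_univ_eq_sum_range (fun k => g' (n + k))]
    refine Finset.sum_congr rfl fun s _ => ?_
    have hs : n + (s : ℕ) < 2*n+1-1 := by omega
    exact dif_pos hs

end Splits


variable {M : Type*} [AddCommGroup M]

lemma nsum_whisker {n : ℕ} (s : ℕ) (hs : s < n) (f : Fin (2*n+1) → M) :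
    ∑ k, (if (wstar n).Adj ⟨n+s, by omega⟩ k then f k else 0)
      = f ⟨s, by omega⟩ + f ⟨2*n, by omega⟩ := by
  have key : ∀ k : Fin (2*n+1), (if (wstar n).Adj ⟨n+s, by omega⟩ k then f k else 0)
      = (if k = ⟨s, by omega⟩ then f k else 0) + (if k = ⟨2*n, by omega⟩ then f k else 0) := by
    intro k
    have hk := k.isLt
    simp only [wstar_adj, Fin.ext_iff, Fin.val_mk, and_true, true_and, or_true, true_or, and_false, false_and, or_false, false_or]
    split_ifs <;> first | (exfalso; omega) | abel
  rw [Finset.sum_congr rfl fun k _ => key k, Finset.sum_add_distrib,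
    Fintype.sum_ite_eq' _ f, Fintype.sum_ite_eq' _ f]

lemma nsum_star {n : ℕ} (f : Fin (2*n+1) → M) :
    ∑ k, (if (wstar n).Adj ⟨2*n, by omega⟩ k then f k else 0)
      = ∑ s : Fin n, f ⟨n + s, by omega⟩ := by
  rw [split3 n (fun k => if (wstar n).Adj ⟨2*n, by omega⟩ k then f k else 0)]
  have p1 : ∀ s : Fin n,
      (if (wstar n).Adj ⟨2*n, by omega⟩ (⟨s, by omega⟩ : Fin (2*n+1)) then f ⟨s, by omega⟩ else 0) = 0 := by
    intro s
    have hs := s.isLt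
    rw [if_neg]
    simp only [wstar_adj, Fin.val_mk, and_true, true_and, or_true, true_or, and_false, false_and, or_false, false_or]
    omega
  have p2 : ∀ s : Fin n,
      (if (wstar n).Adj ⟨2*n, by omega⟩ (⟨n + s, by omega⟩ : Fin (2*n+1)) then f ⟨n + s, by omega⟩ else 0)
        = f ⟨n + s, by omega⟩ := by
    intro s
    have hs := s.isLt
    rw [if_pos]
    simp only [wstar_adj, Fin.val_mk, and_true, true_and, or_true, true_or, and_false, false_and, or_false, false_or]
    omega
  have p3 : (if (wstar n).Adj ⟨2*n, by omega⟩ (⟨2*n, by omega⟩ : Fin (2*n+1)) then f ⟨2*n, by omega⟩ else 0) = 0 := by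
    rw [if_neg]
    simp only [wstar_adj, Fin.val_mk, and_true, true_and, or_true, true_or, and_false, false_and, or_false, false_or]
    omega
  rw [Finset.sum_congr rfl fun s _ => p1 s, Finset.sum_congr rfl fun s _ => p2 s, p3]
  simp

lemma nsum_core {n : ℕ} (j : ℕ) (hj : j < n) (f : Fin (2*n+1) → M) :
    ∑ k, (if (wstar n).Adj ⟨j, by omega⟩ k then f k else 0)
      = (∑ s : Fin n, f ⟨s, by omega⟩) - f ⟨j, by omega⟩ + f ⟨n + j, by omega⟩ := by
  rw [split3 n (fun k => if (wstar n).Adj ⟨j, by omega⟩ k then f k else 0)]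
  have p1 : ∀ s : Fin n,
      (if (wstar n).Adj ⟨j, by omega⟩ (⟨s, by omega⟩ : Fin (2*n+1)) then f ⟨s, by omega⟩ else 0)
        = f ⟨s, by omega⟩ + (if s = (⟨j, hj⟩ : Fin n) then -f ⟨s, by omega⟩ else 0) := by
    intro s
    have hs := s.isLt
    simp only [wstar_adj, Fin.ext_iff, Fin.val_mk, and_true, true_and, or_true, true_or, and_false, false_and, or_false, false_or]
    split_ifs <;> first | (exfalso; omega) | abel
  have p2 : ∀ s : Fin n,
      (if (wstar n).Adj ⟨j, by omega⟩ (⟨n + s, by omega⟩ : Fin (2*n+1)) then f ⟨n + s, by omega⟩ else 0)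
        = (if s = (⟨j, hj⟩ : Fin n) then f ⟨n + s, by omega⟩ else 0) := by
    intro s
    have hs := s.isLt
    simp only [wstar_adj, Fin.ext_iff, Fin.val_mk, and_true, true_and, or_true, true_or, and_false, false_and, or_false, false_or]
    split_ifs <;> first | (exfalso; omega) | abel
  have p3 : (if (wstar n).Adj ⟨j, by omega⟩ (⟨2*n, by omega⟩ : Fin (2*n+1)) then f ⟨2*n, by omega⟩ else 0) = 0 := by
    rw [if_neg]
    simp only [wstar_adj, Fin.val_mk, and_true, true_and, or_true, true_or, and_false, false_and, or_false, false_or]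
    omega
  rw [Finset.sum_congr rfl fun s _ => p1 s, Finset.sum_congr rfl fun s _ => p2 s, p3,
    Finset.sum_add_distrib, Fintype.sum_ite_eq', Fintype.sum_ite_eq']
  abel



/-- The dual vertices (rows indexed by `i`, coordinates by `k`). -/
def A (n i k : ℕ) : ℤ :=
  if i < n then
    (if k < n then (if k = i then -3 else -1)
     else if k < 2*n then (if k = i + n then -1 else 0) else 0)
  else if i < 2*n then
    (if k < n then (if k = i - n then 0 else 1)
     else if k < 2*n then (if k = i then -(n:ℤ) else 1) else 0)
  else (if k < n then 3 else if k < 2*n then 2 else 0)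

lemma A_last (n i : ℕ) : A n i (2*n) = 0 := by
  simp only [A]; split_ifs <;> omega

lemma sumA_core_C {n : ℕ} {i : ℕ} (hi : i < n) :
    ∑ s : Fin n, A n i s = -(n:ℤ) - 2 := by
  have key : ∀ s : Fin n, A n i (s : ℕ) = -1 + (if s = (⟨i, hi⟩ : Fin n) then -2 else 0) := by
    intro s; have hs := s.isLt
    simp only [A, Fin.ext_iff, Fin.val_mk]
    split_ifs <;> omega
  rw [Finset.sum_congr rfl fun s _ => key s, Finset.sum_add_distrib, Finset.sum_const,
    Finset.card_univ, Fintype.card_fin, Fintype.sum_ite_eq']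
  push_cast; ring

lemma sumA_core_W {n : ℕ} {i : ℕ} (hi1 : n ≤ i) (hi2 : i < 2*n) :
    ∑ s : Fin n, A n i s = (n:ℤ) - 1 := by
  have key : ∀ s : Fin n, A n i (s : ℕ) = 1 + (if s = (⟨i - n, by omega⟩ : Fin n) then -1 else 0) := by
    intro s; have hs := s.isLt
    simp only [A, Fin.ext_iff, Fin.val_mk]
    split_ifs <;> omega
  rw [Finset.sum_congr rfl fun s _ => key s, Finset.sum_add_distrib, Finset.sum_const,
    Finset.card_univ, Fintype.card_fin, Fintype.sum_ite_eq']
  push_cast; ring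

lemma sumA_core_S {n : ℕ} :
    ∑ s : Fin n, A n (2*n) (s : ℕ) = 3*(n:ℤ) := by
  have key : ∀ s : Fin n, A n (2*n) (s : ℕ) = 3 := by
    intro s; have hs := s.isLt
    simp only [A]; split_ifs <;> omega
  rw [Finset.sum_congr rfl fun s _ => key s, Finset.sum_const, Finset.card_univ, Fintype.card_fin]
  push_cast; ring

lemma sumA_whisk_C {n : ℕ} {i : ℕ} (hi : i < n) :
    ∑ s : Fin n, A n i (n + (s : ℕ)) = -1 := by
  have key : ∀ s : Fin n, A n i (n + (s : ℕ)) = 0 + (if s = (⟨i, hi⟩ : Fin n) then -1 else 0) := by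
    intro s; have hs := s.isLt
    simp only [A, Fin.ext_iff, Fin.val_mk]
    split_ifs <;> omega
  rw [Finset.sum_congr rfl fun s _ => key s, Finset.sum_add_distrib, Finset.sum_const,
    Finset.card_univ, Fintype.card_fin, Fintype.sum_ite_eq']
  simp

lemma sumA_whisk_W {n : ℕ} {i : ℕ} (hi1 : n ≤ i) (hi2 : i < 2*n) :
    ∑ s : Fin n, A n i (n + (s : ℕ)) = -1 := by
  have key : ∀ s : Fin n, A n i (n + (s : ℕ))
      = 1 + (if s = (⟨i - n, by omega⟩ : Fin n) then -(n:ℤ) - 1 else 0) := by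
    intro s; have hs := s.isLt
    simp only [A, Fin.ext_iff, Fin.val_mk]
    split_ifs <;> omega
  rw [Finset.sum_congr rfl fun s _ => key s, Finset.sum_add_distrib, Finset.sum_const,
    Finset.card_univ, Fintype.card_fin, Fintype.sum_ite_eq']
  push_cast; ring

lemma sumA_whisk_S {n : ℕ} :
    ∑ s : Fin n, A n (2*n) (n + (s : ℕ)) = 2*(n:ℤ) := by
  have key : ∀ s : Fin n, A n (2*n) (n + (s : ℕ)) = 2 := by
    intro s; have hs := s.isLt
    simp only [A]; split_ifs <;> omega
  rw [Finset.sum_congr rfl fun s _ => key s, Finset.sum_const, Finset.card_univ, Fintype.card_fin]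
  push_cast; ring

lemma keyZ (n : ℕ) (hn : 3 ≤ n) (i j : Fin (2*n+1)) :
    ∑ k, lap (wstar n) j k * A n i k = if (j:ℕ) = (i:ℕ) then -(2*(n:ℤ)) else 1 := by
  have hdot := lap_dot (wstar n) (R := ℤ) j (fun k => A n (i : ℕ) (k : ℕ))
  simp only [Int.cast_id] at hdot
  rw [hdot]
  have hi := i.isLt
  obtain ⟨jv, hj⟩ := j
  simp only [Fin.val_mk]
  rcases lt_or_ge jv n with hjc | hjge
  · -- j is a core vertex
    rw [nsum_core jv hjc (fun k => A n (i:ℕ) jv - A n (i:ℕ) (k:ℕ))]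
    simp only [Fin.val_mk]
    rw [Finset.sum_sub_distrib, Finset.sum_const, Finset.card_univ, Fintype.card_fin,
      nsmul_eq_mul]
    rcases lt_or_ge (i:ℕ) n with hic | hige
    · rw [sumA_core_C hic]
      simp only [A]
      split_ifs <;> push_cast <;> first | ring1 | omega
    · rcases lt_or_ge (i:ℕ) (2*n) with hiw | hist
      · rw [sumA_core_W hige hiw]
        simp only [A]
        split_ifs <;> push_cast <;> first | ring1 | omega
      · rw [show (i:ℕ) = 2*n by omega, sumA_core_S]
        simp only [A]
        split_ifs <;> push_cast <;> first | ring1 | omega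
  · rcases lt_or_ge jv (2*n) with hjw | hjst
    · -- j is a whisker vertex
      have hje : (⟨jv, hj⟩ : Fin (2*n+1)) = ⟨n + (jv - n), by omega⟩ := Fin.ext (by simp only [Fin.val_mk]; omega)
      simp only [hje]
      rw [nsum_whisker (jv - n) (by omega) (fun k => A n (i:ℕ) jv - A n (i:ℕ) (k:ℕ))]
      simp only [Fin.val_mk, A_last]
      simp only [A]
      split_ifs <;> push_cast <;> first | ring1 | omega
    · -- j is the star vertex
      have hje : (⟨jv, hj⟩ : Fin (2*n+1)) = ⟨2*n, by omega⟩ := Fin.ext (by simp only [Fin.val_mk]; omega)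
      simp only [hje]
      rw [nsum_star (fun k => A n (i:ℕ) jv - A n (i:ℕ) (k:ℕ))]
      simp only [Fin.val_mk]
      simp only [show jv = 2*n from by omega]
      simp only [A_last, zero_sub, Finset.sum_neg_distrib]
      rcases lt_or_ge (i:ℕ) n with hic | hige
      · rw [sumA_whisk_C hic]
        split_ifs <;> push_cast <;> first | ring1 | omega
      · rcases lt_or_ge (i:ℕ) (2*n) with hiw | hist
        · rw [sumA_whisk_W hige hiw]
          split_ifs <;> push_cast <;> first | ring1 | omega
        · rw [show (i:ℕ) = 2*n by omega, sumA_whisk_S]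
          split_ifs <;> push_cast <;> first | ring1 | omega



lemma lap_symm {m : ℕ} (G : SimpleGraph (Fin m)) (j k : Fin m) : lap G j k = lap G k j := by
  rw [lap_apply, lap_apply]
  by_cases h : j = k
  · subst h; rfl
  · rw [if_neg h, if_neg (Ne.symm h)]
    congr 1
    simp [SimpleGraph.adj_comm]

lemma lap_row_sum {m : ℕ} (G : SimpleGraph (Fin m)) (j : Fin m) :
    ∑ k, lap G j k = 0 := by
  have h := lap_dot G (R := ℤ) j (fun _ => 1)
  simp only [Int.cast_id, mul_one, sub_self, ite_self, Finset.sum_const_zero] at h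
  exact h

/-- The vertex map of the simplex `P_{W*(K_n)}`. -/
noncomputable def Vv (n : ℕ) : Fin (2*n+1) → Fin (2*n+1-1) → ℝ :=
  fun r j => (lap (wstar n) r ⟨(j : ℕ), by have := j.isLt; omega⟩ : ℝ)

/-- The candidate dual vertices. -/
noncomputable def aR (n : ℕ) : Fin (2*n+1) → Fin (2*n+1-1) → ℝ :=
  fun i k => ((A n i k : ℤ) : ℝ)

lemma PG_eq (n : ℕ) : PG (wstar n) = convexHull ℝ (Set.range (Vv n)) := rfl

lemma keyZ' (n : ℕ) (hn : 3 ≤ n) (i j : Fin (2*n+1)) :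
    ∑ k : Fin (2*n+1-1), A n (i : ℕ) (k : ℕ) * lap (wstar n) j ⟨(k:ℕ), by have := k.isLt; omega⟩
      = if (j:ℕ) = (i:ℕ) then -(2*(n:ℤ)) else 1 := by
  have hz := keyZ n hn i j
  rw [Fin.sum_univ_castSucc] at hz
  rw [Fin.val_last, A_last, mul_zero, add_zero] at hz
  rw [← hz]
  refine Finset.sum_congr rfl fun k _ => ?_
  rw [mul_comm]
  rfl

lemma dotAV (n : ℕ) (hn : 3 ≤ n) (i j : Fin (2*n+1)) :
    ∑ k, aR n i k * Vv n j k = if (j:ℕ) = (i:ℕ) then -(2*(n:ℝ)) else 1 := by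
  have h : ∀ k : Fin (2*n+1-1), aR n i k * Vv n j k
      = ((A n (i : ℕ) (k : ℕ) * lap (wstar n) j ⟨(k:ℕ), by have := k.isLt; omega⟩ : ℤ) : ℝ) := by
    intro k
    simp only [aR, Vv]
    push_cast
    ring
  rw [Finset.sum_congr rfl fun k _ => h k, ← Int.cast_sum, keyZ' n hn i j]
  split_ifs <;> push_cast <;> ring

lemma vSpan (n : ℕ) (hn : 3 ≤ n) (w : Fin (2*n+1-1) → ℝ)
    (hw : ∀ j, ∑ k, Vv n j k * w k = 0) : w = 0 := by
  set w' : Fin (2*n+1) → ℝ := fun k => if h : (k:ℕ) < 2*n+1-1 then w ⟨(k:ℕ), h⟩ else 0 with hw'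
  have hlast : w' ⟨2*n, by omega⟩ = 0 := by
    rw [hw']
    exact dif_neg (by simp only [Fin.val_mk]; omega)
  have hE : ∀ j, ∑ k : Fin (2*n+1), (if (wstar n).Adj j k then w' j - w' k else 0) = 0 := by
    intro j
    rw [← lap_dot (wstar n) (R := ℝ) j w']
    rw [Fin.sum_univ_castSucc]
    have h2 : w' (Fin.last (2*n)) = 0 := by
      rw [hw']
      exact dif_neg (by simp only [Fin.val_last]; omega)
    rw [h2, mul_zero, add_zero, ← hw j]
    refine Finset.sum_congr rfl fun k _ => ?_
    have hk : ((Fin.castSucc k : Fin (2*n+1)) : ℕ) < 2*n+1-1 := by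
      simpa using k.isLt
    have h3 : w' (Fin.castSucc k) = w k := by
      rw [hw']
      simp only
      rw [dif_pos hk]
      exact congrArg w (Fin.ext (by simp))
    rw [h3]
    rfl
  have hwk : ∀ (s : ℕ) (hs : s < n), w' ⟨s, by omega⟩ = 2 * w' ⟨n + s, by omega⟩ := by
    intro s hs
    have h := hE ⟨n + s, by omega⟩
    rw [nsum_whisker s hs (fun k => w' ⟨n + s, by omega⟩ - w' k)] at h
    rw [hlast] at h
    linarith [h]
  have hstar : ∑ s : Fin n, w' ⟨n + (s:ℕ), by omega⟩ = 0 := by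
    have h := hE ⟨2*n, by omega⟩
    rw [nsum_star (fun k => w' ⟨2*n, by omega⟩ - w' k)] at h
    simp only [hlast, zero_sub, Finset.sum_neg_distrib, neg_eq_zero] at h
    exact h
  have hsumcore : ∑ s : Fin n, w' ⟨(s:ℕ), by omega⟩ = 0 := by
    rw [Finset.sum_congr rfl fun (s : Fin n) _ => hwk s.val s.isLt, ← Finset.mul_sum, hstar, mul_zero]
  have hcz : ∀ (j0 : ℕ) (hj0 : j0 < n), w' ⟨j0, by omega⟩ = 0 := by
    intro j0 hj0
    have h := hE ⟨j0, by omega⟩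
    rw [nsum_core j0 hj0 (fun k => w' ⟨j0, by omega⟩ - w' k)] at h
    rw [Finset.sum_sub_distrib, hsumcore, Finset.sum_const, Finset.card_univ,
      Fintype.card_fin, nsmul_eq_mul] at h
    have h4 := hwk j0 hj0
    have hne : (2*(n:ℝ)+1) ≠ 0 := by positivity
    have h5 : (2*(n:ℝ)+1) * w' ⟨n + j0, by omega⟩ = 0 := by
      linear_combination h - ((n:ℝ)+1) * h4
    have h6 : w' ⟨n + j0, by omega⟩ = 0 := by
      rcases mul_eq_zero.mp h5 with h' | h'
      · exact absurd h' hne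
      · exact h'
    rw [h4, h6, mul_zero]
  have hwz : ∀ (j0 : ℕ) (hj0 : j0 < n), w' ⟨n + j0, by omega⟩ = 0 := by
    intro j0 hj0
    have h4 := hwk j0 hj0
    have h5 := hcz j0 hj0
    linarith [h4, h5]
  funext k
  have hk := k.isLt
  have : w k = w' ⟨(k:ℕ), by omega⟩ := by
    rw [hw']
    simp only [Fin.val_mk]
    rw [dif_pos (by omega : (k:ℕ) < 2*n+1-1)]
  rw [this]
  rcases lt_or_ge (k:ℕ) n with h | h
  · rw [hcz (k:ℕ) h]; rfl
  · have : (⟨(k:ℕ), by omega⟩ : Fin (2*n+1)) = ⟨n + ((k:ℕ) - n), by omega⟩ :=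
      Fin.ext (by simp only [Fin.val_mk]; omega)
    rw [this, hwz ((k:ℕ) - n) (by omega)]; rfl



lemma sumV0 (n : ℕ) (k : Fin (2*n+1-1)) : ∑ j : Fin (2*n+1), Vv n j k = 0 := by
  have h : ∀ j : Fin (2*n+1), Vv n j k
      = ((lap (wstar n) (⟨(k:ℕ), by have := k.isLt; omega⟩ : Fin (2*n+1)) j : ℤ) : ℝ) := by
    intro j
    simp only [Vv]
    rw [lap_symm]
  rw [Finset.sum_congr rfl fun j _ => h j, ← Int.cast_sum, lap_row_sum, Int.cast_zero]

lemma aSpan (n : ℕ) (hn : 3 ≤ n) (z : Fin (2*n+1-1) → ℝ)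
    (hz : ∀ i, ∑ k, aR n i k * z k = 0) : z = 0 := by
  -- the two coordinate sums
  have E1 : 3 * (∑ s : Fin n, z ⟨(s:ℕ), by omega⟩) + 2 * (∑ s : Fin n, z ⟨n + (s:ℕ), by omega⟩) = 0 := by
    have h := hz ⟨2*n, by omega⟩
    rw [split2 n (fun k => aR n ⟨2*n, by omega⟩ k * z k)] at h
    have p1 : ∀ s : Fin n, aR n ⟨2*n, by omega⟩ ⟨(s:ℕ), by omega⟩ * z ⟨(s:ℕ), by omega⟩
        = 3 * z ⟨(s:ℕ), by omega⟩ := by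
      intro s; have hs := s.isLt
      simp only [aR, A, Fin.val_mk]
      split_ifs <;> first | (exfalso; omega) | (push_cast; ring1)
    have p2 : ∀ s : Fin n, aR n ⟨2*n, by omega⟩ ⟨n + (s:ℕ), by omega⟩ * z ⟨n + (s:ℕ), by omega⟩
        = 2 * z ⟨n + (s:ℕ), by omega⟩ := by
      intro s; have hs := s.isLt
      simp only [aR, A, Fin.val_mk]
      split_ifs <;> first | (exfalso; omega) | (push_cast; ring1)
    rw [Finset.sum_congr rfl fun s _ => p1 s, Finset.sum_congr rfl fun s _ => p2 s,
      ← Finset.mul_sum, ← Finset.mul_sum] at h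
    exact h
  have E3 : ∀ t : Fin n, -(∑ s : Fin n, z ⟨(s:ℕ), by omega⟩) - 2 * z ⟨(t:ℕ), by omega⟩
      - z ⟨n + (t:ℕ), by omega⟩ = 0 := by
    intro t
    have ht := t.isLt
    have h := hz ⟨(t:ℕ), by omega⟩
    rw [split2 n (fun k => aR n ⟨(t:ℕ), by omega⟩ k * z k)] at h
    have p1 : ∀ s : Fin n, aR n ⟨(t:ℕ), by omega⟩ ⟨(s:ℕ), by omega⟩ * z ⟨(s:ℕ), by omega⟩
        = -(z ⟨(s:ℕ), by omega⟩) + (if s = t then -2 * z ⟨(s:ℕ), by omega⟩ else 0) := by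
      intro s; have hs := s.isLt
      simp only [aR, A, Fin.val_mk, Fin.ext_iff]
      split_ifs <;> first | (exfalso; omega) | (push_cast; ring1)
    have p2 : ∀ s : Fin n, aR n ⟨(t:ℕ), by omega⟩ ⟨n + (s:ℕ), by omega⟩ * z ⟨n + (s:ℕ), by omega⟩
        = (if s = t then -(z ⟨n + (s:ℕ), by omega⟩) else 0) := by
      intro s; have hs := s.isLt
      simp only [aR, A, Fin.val_mk, Fin.ext_iff]
      split_ifs <;> first | (exfalso; omega) | (push_cast; ring1)
    rw [Finset.sum_congr rfl fun s _ => p1 s, Finset.sum_congr rfl fun s _ => p2 s,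
      Finset.sum_add_distrib, Finset.sum_neg_distrib, Fintype.sum_ite_eq',
      Fintype.sum_ite_eq'] at h
    linarith [h]
  have E2 : ∀ t : Fin n, (∑ s : Fin n, z ⟨(s:ℕ), by omega⟩) + (∑ s : Fin n, z ⟨n + (s:ℕ), by omega⟩)
      - z ⟨(t:ℕ), by omega⟩ - ((n:ℝ)+1) * z ⟨n + (t:ℕ), by omega⟩ = 0 := by
    intro t
    have ht := t.isLt
    have h := hz ⟨n + (t:ℕ), by omega⟩
    rw [split2 n (fun k => aR n ⟨n + (t:ℕ), by omega⟩ k * z k)] at h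
    have p1 : ∀ s : Fin n, aR n ⟨n + (t:ℕ), by omega⟩ ⟨(s:ℕ), by omega⟩ * z ⟨(s:ℕ), by omega⟩
        = z ⟨(s:ℕ), by omega⟩ + (if s = t then -(z ⟨(s:ℕ), by omega⟩) else 0) := by
      intro s; have hs := s.isLt
      simp only [aR, A, Fin.val_mk, Fin.ext_iff]
      split_ifs <;> first | (exfalso; omega) | (push_cast; ring1)
    have p2 : ∀ s : Fin n, aR n ⟨n + (t:ℕ), by omega⟩ ⟨n + (s:ℕ), by omega⟩ * z ⟨n + (s:ℕ), by omega⟩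
        = z ⟨n + (s:ℕ), by omega⟩ + (if s = t then (-(n:ℝ)-1) * z ⟨n + (s:ℕ), by omega⟩ else 0) := by
      intro s; have hs := s.isLt
      simp only [aR, A, Fin.val_mk, Fin.ext_iff]
      split_ifs <;> first | (exfalso; omega) | (push_cast; ring1)
    rw [Finset.sum_congr rfl fun s _ => p1 s, Finset.sum_congr rfl fun s _ => p2 s,
      Finset.sum_add_distrib, Finset.sum_add_distrib, Fintype.sum_ite_eq',
      Fintype.sum_ite_eq'] at h
    linarith [h]
  -- now the algebra
  have E4 : (∑ s : Fin n, z ⟨n + (s:ℕ), by omega⟩)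
      = -(n:ℝ) * (∑ s : Fin n, z ⟨(s:ℕ), by omega⟩) - 2 * (∑ s : Fin n, z ⟨(s:ℕ), by omega⟩) := by
    have e : ∀ t : Fin n, z ⟨n + (t:ℕ), by omega⟩
        = -(∑ s : Fin n, z ⟨(s:ℕ), by omega⟩) - 2 * z ⟨(t:ℕ), by omega⟩ :=
      fun t => by linarith [E3 t]
    rw [Finset.sum_congr rfl fun t _ => e t, Finset.sum_sub_distrib, Finset.sum_const, Finset.card_univ, Fintype.card_fin,
      ← Finset.mul_sum, nsmul_eq_mul]
    ring
  have hC : (∑ s : Fin n, z ⟨(s:ℕ), by omega⟩) = 0 := by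
    have hne : (2*(n:ℝ)+1) ≠ 0 := by positivity
    have h5 : (2*(n:ℝ)+1) * (∑ s : Fin n, z ⟨(s:ℕ), by omega⟩) = 0 := by
      linear_combination -E1 + 2 * E4
    rcases mul_eq_zero.mp h5 with h' | h'
    · exact absurd h' hne
    · exact h'
  have hzc : ∀ t : Fin n, z ⟨(t:ℕ), by omega⟩ = 0 := by
    intro t
    have hne : (2*(n:ℝ)+1) ≠ 0 := by positivity
    have h5 : (2*(n:ℝ)+1) * z ⟨(t:ℕ), by omega⟩ = 0 := by
      linear_combination (E2 t) - ((n:ℝ)+1) * (E3 t) - E4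
    rcases mul_eq_zero.mp h5 with h' | h'
    · exact absurd h' hne
    · exact h'
  have hzw : ∀ t : Fin n, z ⟨n + (t:ℕ), by omega⟩ = 0 := by
    intro t
    have := E3 t
    have := hzc t
    linarith [E3 t, hzc t, hC]
  funext k
  have hk := k.isLt
  rcases lt_or_ge (k:ℕ) n with h | h
  · exact hzc ⟨(k:ℕ), h⟩
  · have he : k = ⟨n + ((k:ℕ) - n), by omega⟩ := Fin.ext (by simp only [Fin.val_mk]; omega)
    rw [he]
    exact hzw ⟨(k:ℕ) - n, by omega⟩

lemma sumA0 (n : ℕ) (hn : 3 ≤ n) (k : Fin (2*n+1-1)) :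
    ∑ i : Fin (2*n+1), aR n i k = 0 := by
  have h := vSpan n hn (fun k => ∑ i : Fin (2*n+1), aR n i k) ?_
  · exact congrFun h k
  intro j
  have swap : ∑ k : Fin (2*n+1-1), Vv n j k * (∑ i : Fin (2*n+1), aR n i k)
      = ∑ i : Fin (2*n+1), ∑ k : Fin (2*n+1-1), aR n i k * Vv n j k := by
    rw [Finset.sum_comm]
    refine Finset.sum_congr rfl fun k _ => ?_
    rw [Finset.mul_sum]
    refine Finset.sum_congr rfl fun i _ => ?_
    ring
  rw [swap, Finset.sum_congr rfl fun i _ => dotAV n hn i j]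
  have h2 : ∀ i : Fin (2*n+1), (if (j:ℕ) = (i:ℕ) then -(2*(n:ℝ)) else 1)
      = 1 + (if i = j then -(2*(n:ℝ)) - 1 else 0) := by
    intro i
    simp only [Fin.ext_iff]
    by_cases h3 : (j:ℕ) = (i:ℕ)
    · rw [if_pos h3, if_pos h3.symm]; ring
    · rw [if_neg h3, if_neg (fun hh => h3 (hh.symm)), add_zero]
  rw [Finset.sum_congr rfl fun i _ => h2 i, Finset.sum_add_distrib, Finset.sum_const,
    Finset.card_univ, Fintype.card_fin, Fintype.sum_ite_eq', nsmul_eq_mul]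
  push_cast
  ring



lemma sum_dots (n : ℕ) (hn : 3 ≤ n) (x : Fin (2*n+1-1) → ℝ) :
    ∑ i : Fin (2*n+1), (∑ k, aR n i k * x k) = 0 := by
  rw [Finset.sum_comm]
  have h : ∀ k : Fin (2*n+1-1), ∑ i : Fin (2*n+1), aR n i k * x k = 0 := by
    intro k
    rw [← Finset.sum_mul, sumA0 n hn k, zero_mul]
  rw [Finset.sum_congr rfl fun k _ => h k, Finset.sum_const_zero]

lemma ite_sum_helper (n : ℕ) (c : Fin (2*n+1) → ℝ) (i0 : Fin (2*n+1)) :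
    ∑ i : Fin (2*n+1), c i * (if (i:ℕ) = (i0:ℕ) then -(2*(n:ℝ)) else 1)
      = (∑ i, c i) + c i0 * (-(2*(n:ℝ)) - 1) := by
  have h2 : ∀ i : Fin (2*n+1), c i * (if (i:ℕ) = (i0:ℕ) then -(2*(n:ℝ)) else 1)
      = c i + (if i = i0 then c i * (-(2*(n:ℝ)) - 1) else 0) := by
    intro i
    by_cases h3 : (i:ℕ) = (i0:ℕ)
    · rw [if_pos h3, if_pos (Fin.ext h3)]; ring
    · rw [if_neg h3, if_neg (fun hh => h3 (by rw [hh])), add_zero, mul_one]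
  rw [Finset.sum_congr rfl fun i _ => h2 i, Finset.sum_add_distrib, Fintype.sum_ite_eq']

lemma memP (n : ℕ) (hn : 3 ≤ n) (x : Fin (2*n+1-1) → ℝ)
    (hx : ∀ i, ∑ k, aR n i k * x k ≤ 1) :
    x ∈ convexHull ℝ (Set.range (Vv n)) := by
  set c : Fin (2*n+1) → ℝ := fun i => (1 - ∑ k, aR n i k * x k) / (2*(n:ℝ)+1) with hc
  have hD : (0:ℝ) < 2*(n:ℝ)+1 := by positivity
  have hc0 : ∀ i, 0 ≤ c i := fun i => div_nonneg (by linarith [hx i]) (le_of_lt hD)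
  have hc1 : ∑ i, c i = 1 := by
    rw [hc]
    rw [← Finset.sum_div, Finset.sum_sub_distrib, sum_dots n hn x, Finset.sum_const,
      Finset.card_univ, Fintype.card_fin, nsmul_eq_mul, mul_one, sub_zero]
    push_cast
    field_simp
  have hxeq : x = ∑ i, c i • Vv n i := by
    have hzz := aSpan n hn (fun k => x k - (∑ i, c i • Vv n i) k) ?_
    · funext k
      have h' := congrFun hzz k
      simp only [Pi.zero_apply] at h'
      linarith [h']
    intro i0
    have expand : ∀ k : Fin (2*n+1-1), aR n i0 k * (x k - (∑ i, c i • Vv n i) k)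
        = aR n i0 k * x k - ∑ i : Fin (2*n+1), c i * (aR n i0 k * Vv n i k) := by
      intro k
      simp only [Finset.sum_apply, Pi.smul_apply, smul_eq_mul]
      rw [mul_sub, Finset.mul_sum]
      congr 1
      exact Finset.sum_congr rfl fun i _ => by ring
    rw [Finset.sum_congr rfl fun k _ => expand k, Finset.sum_sub_distrib, Finset.sum_comm]
    have inner : ∀ i : Fin (2*n+1), ∑ k : Fin (2*n+1-1), c i * (aR n i0 k * Vv n i k)
        = c i * (if (i:ℕ) = (i0:ℕ) then -(2*(n:ℝ)) else 1) := by
      intro i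
      rw [← Finset.mul_sum, dotAV n hn i0 i]
    rw [Finset.sum_congr rfl fun i _ => inner i, ite_sum_helper n c i0, hc1]
    have : c i0 = (1 - ∑ k, aR n i0 k * x k) / (2*(n:ℝ)+1) := rfl
    rw [this]
    field_simp
    ring
  rw [hxeq]
  have hmem := Finset.centerMass_mem_convexHull (t := Finset.univ) (w := c) (z := Vv n)
    (fun i _ => hc0 i) (by rw [hc1]; norm_num) (fun i _ => Set.mem_range_self i)
  rwa [Finset.centerMass_eq_of_sum_1 _ _ hc1] at hmem

lemma Pbound (n : ℕ) (hn : 3 ≤ n) (y : Fin (2*n+1-1) → ℝ)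
    (hy : y ∈ convexHull ℝ (Set.range (Vv n))) (i0 : Fin (2*n+1)) :
    ∑ k, aR n i0 k * y k ≤ 1 := by
  have hlin : IsLinearMap ℝ (fun y : Fin (2*n+1-1) → ℝ => ∑ k, aR n i0 k * y k) := by
    constructor
    · intro p q
      rw [← Finset.sum_add_distrib]
      exact Finset.sum_congr rfl fun k _ => by simp [mul_add]
    · intro ccc p
      rw [smul_eq_mul, Finset.mul_sum]
      exact Finset.sum_congr rfl fun k _ => by simp [smul_eq_mul]; ring
  have hconv : Convex ℝ {y : Fin (2*n+1-1) → ℝ | ∑ k, aR n i0 k * y k ≤ 1} :=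
    convex_halfSpace_le hlin 1
  have hsub : Set.range (Vv n) ⊆ {y : Fin (2*n+1-1) → ℝ | ∑ k, aR n i0 k * y k ≤ 1} := by
    rintro _ ⟨j, rfl⟩
    simp only [Set.mem_setOf_eq]
    rw [dotAV n hn i0 j]
    split_ifs
    · have : (0:ℝ) ≤ 2*(n:ℝ) := by positivity
      linarith
    · exact le_refl 1
  exact convexHull_min hsub hconv hy

lemma interior0 (n : ℕ) (hn : 3 ≤ n) :
    (0 : Fin (2*n+1-1) → ℝ) ∈ interior (convexHull ℝ (Set.range (Vv n))) := by
  set U : Set (Fin (2*n+1-1) → ℝ) := {x | ∀ i, ∑ k, aR n i k * x k < 1} with hU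
  have hUopen : IsOpen U := by
    have : U = ⋂ i : Fin (2*n+1), {x : Fin (2*n+1-1) → ℝ | ∑ k, aR n i k * x k < 1} := by
      ext x; simp [hU]
    rw [this]
    refine isOpen_iInter_of_finite fun i => ?_
    exact isOpen_lt (by continuity) continuous_const
  have h0U : (0 : Fin (2*n+1-1) → ℝ) ∈ U := by
    intro i
    simp
  have hsub : U ⊆ convexHull ℝ (Set.range (Vv n)) :=
    fun x hx => memP n hn x fun i => le_of_lt (hx i)
  exact interior_maximal hsub hUopen h0U

lemma dual_eq (n : ℕ) (hn : 3 ≤ n) :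
    {x : Fin (2*n+1-1) → ℝ | ∀ y ∈ PG (wstar n), ∑ i, x i * y i ≤ 1}
      = convexHull ℝ ((Finset.image (aR n) Finset.univ : Finset (Fin (2*n+1-1) → ℝ))
          : Set (Fin (2*n+1-1) → ℝ)) := by
  apply Set.Subset.antisymm
  · intro x hx
    simp only [Set.mem_setOf_eq] at hx
    set t : Fin (2*n+1) → ℝ := fun j => (1 - ∑ k, x k * Vv n j k) / (2*(n:ℝ)+1) with htt
    have hD : (0:ℝ) < 2*(n:ℝ)+1 := by positivity
    have hdle : ∀ j, ∑ k, x k * Vv n j k ≤ 1 := fun j =>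
      hx (Vv n j) (by rw [PG_eq]; exact subset_convexHull ℝ _ (Set.mem_range_self j))
    have ht0 : ∀ j, 0 ≤ t j := fun j => div_nonneg (by linarith [hdle j]) hD.le
    have hsd : ∑ j : Fin (2*n+1), (∑ k, x k * Vv n j k) = 0 := by
      rw [Finset.sum_comm]
      have h5 : ∀ k : Fin (2*n+1-1), ∑ j : Fin (2*n+1), x k * Vv n j k = 0 := fun k => by
        rw [← Finset.mul_sum, sumV0 n k, mul_zero]
      rw [Finset.sum_congr rfl fun k _ => h5 k, Finset.sum_const_zero]
    have ht1 : ∑ j, t j = 1 := by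
      rw [htt]
      rw [← Finset.sum_div, Finset.sum_sub_distrib, hsd, Finset.sum_const,
        Finset.card_univ, Fintype.card_fin, nsmul_eq_mul, mul_one, sub_zero]
      push_cast
      field_simp
    have hxeq : x = ∑ j, t j • aR n j := by
      have hzz := vSpan n hn (fun k => x k - (∑ j, t j • aR n j) k) ?_
      · funext k
        have h' := congrFun hzz k
        simp only [Pi.zero_apply] at h'
        linarith [h']
      intro j0
      have expand : ∀ k : Fin (2*n+1-1), Vv n j0 k * (x k - (∑ j, t j • aR n j) k)
          = x k * Vv n j0 k - ∑ j : Fin (2*n+1), t j * (aR n j k * Vv n j0 k) := by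
        intro k
        simp only [Finset.sum_apply, Pi.smul_apply, smul_eq_mul]
        rw [mul_sub, Finset.mul_sum]
        rw [mul_comm (Vv n j0 k) (x k)]
        congr 1
        exact Finset.sum_congr rfl fun j _ => by ring
      rw [Finset.sum_congr rfl fun k _ => expand k, Finset.sum_sub_distrib, Finset.sum_comm]
      have inner : ∀ j : Fin (2*n+1), ∑ k : Fin (2*n+1-1), t j * (aR n j k * Vv n j0 k)
          = t j * (if (j:ℕ) = ((j0:Fin (2*n+1)):ℕ) then -(2*(n:ℝ)) else 1) := by
        intro j
        rw [← Finset.mul_sum, dotAV n hn j j0]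
        congr 1
        by_cases h6 : (j0:ℕ) = (j:ℕ)
        · rw [if_pos h6, if_pos h6.symm]
        · rw [if_neg h6, if_neg (fun hh => h6 hh.symm)]
      rw [Finset.sum_congr rfl fun j _ => inner j, ite_sum_helper n t j0, ht1]
      have h7 : t j0 = (1 - ∑ k, x k * Vv n j0 k) / (2*(n:ℝ)+1) := rfl
      rw [h7]
      field_simp
      ring
    rw [hxeq]
    have hmem := Finset.centerMass_mem_convexHull (t := Finset.univ) (w := t) (z := aR n)
      (fun j _ => ht0 j) (by rw [ht1]; norm_num)
      (fun j _ => Finset.mem_coe.mpr (Finset.mem_image_of_mem _ (Finset.mem_univ j)))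
    rwa [Finset.centerMass_eq_of_sum_1 _ _ ht1] at hmem
  · apply convexHull_min
    · rintro v hv
      rw [Finset.mem_coe, Finset.mem_image] at hv
      obtain ⟨i0, _, rfl⟩ := hv
      intro y hy
      rw [PG_eq] at hy
      exact Pbound n hn y hy i0
    · intro x1 hx1 x2 hx2 a b ha hb hab
      intro y hy
      simp only [Pi.add_apply, Pi.smul_apply, smul_eq_mul]
      have e : ∑ i, (a * x1 i + b * x2 i) * y i
          = a * ∑ i, x1 i * y i + b * ∑ i, x2 i * y i := by
        rw [Finset.mul_sum, Finset.mul_sum, ← Finset.sum_add_distrib]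
        exact Finset.sum_congr rfl fun i _ => by ring
      rw [e]
      have h1 := mul_le_mul_of_nonneg_left (hx1 y hy) ha
      have h2 := mul_le_mul_of_nonneg_left (hx2 y hy) hb
      linarith


end WK

/-- For all `n ≥ 3`, the Laplacian simplex `P_{W*(K_n)} ⊂ ℝ^{2n}` is
reflexive. -/
theorem isReflexive_PG_wstar (n : ℕ) (hn : 3 ≤ n) :
    IsReflexive (PG (wstar n)) := by
  refine ⟨?_, Finset.image (WK.aR n) Finset.univ, ?_, ?_⟩
  · rw [WK.PG_eq]
    exact WK.interior0 n hn
  · intro v hv i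
    obtain ⟨i0, _, rfl⟩ := Finset.mem_image.mp hv
    exact ⟨WK.A n i0 i, rfl⟩
  · exact WK.dual_eq n hn
end
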